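/- Let ∂ be a regular infinite cardinal, α an ordinal, and cℓ : P(α) → P(α) a monotone operation (u ⊆ v implies cℓ(u) ⊆ cℓ(v)) with u ⊆ cℓ(u) for all u ⊆ α. Then the following are equivalent: (i) there is no ⊆-decreasing sequence ⟨U_ε : ε < ∂⟩ of subsets of α such that U_ε ⊄ cℓ(U_{ε+1}) for every ε < ∂; (ii) for every sequence ⟨β_ε : ε < ∂⟩ of ordinals below α there is ε < ∂ with β_ε ∈ cℓ({β_ζ : ε < ζ < ∂}). -/

import Mathlib

/-- let `∂` be a regular infinite cardinal, `α` an ordinal, and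
`cℓ : P(α) → P(α)` a monotone operation with `u ⊆ cℓ u`.  Then the following are
equivalent: (i) there is no `⊆`-decreasing sequence `⟨U_ε : ε < ∂⟩` of subsets of `α`
with `U_ε ⊄ cℓ (U_{ε+1})` for every `ε < ∂`; (ii) for every sequence `⟨β_ε : ε < ∂⟩`
of ordinals below `α` there is `ε < ∂` with `β_ε ∈ cℓ {β_ζ : ε < ζ < ∂}`. -/
theorem stmt12 (par : Cardinal) (hpar : par.IsRegular) (α : Ordinal)
    (cl : Set Ordinal → Set Ordinal)
    (hcl : ∀ u, u ⊆ Set.Iio α → cl u ⊆ Set.Iio α)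
    (hmono : ∀ u v, u ⊆ v → v ⊆ Set.Iio α → cl u ⊆ cl v)
    (hsub : ∀ u, u ⊆ Set.Iio α → u ⊆ cl u) :
    (¬ ∃ U : Ordinal → Set Ordinal,
        (∀ ε < par.ord, U ε ⊆ Set.Iio α) ∧
        (∀ ε ζ, ε ≤ ζ → ζ < par.ord → U ζ ⊆ U ε) ∧
        (∀ ε < par.ord, ¬ U ε ⊆ cl (U (ε + 1)))) ↔
    (∀ β : Ordinal → Ordinal, (∀ ε < par.ord, β ε < α) →
        ∃ ε < par.ord, β ε ∈ cl {x | ∃ ζ, ε < ζ ∧ ζ < par.ord ∧ x = β ζ}) := by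
  have hlim : Order.IsSuccLimit par.ord := Cardinal.isSuccLimit_ord hpar.aleph0_le
  constructor
  · intro hU β hβ
    by_contra hcon
    push_neg at hcon
    apply hU
    refine ⟨fun ε => {x | ∃ ζ, ε ≤ ζ ∧ ζ < par.ord ∧ x = β ζ}, ?_, ?_, ?_⟩
    · rintro ε hε x ⟨ζ, _, hζ, rfl⟩
      exact hβ ζ hζ
    · rintro ε ζ hεζ _ x ⟨ξ, hξ1, hξ2, rfl⟩
      exact ⟨ξ, le_trans hεζ hξ1, hξ2, rfl⟩
    · intro ε hε hsubs
      have hmem : β ε ∈ {x | ∃ ζ, ε ≤ ζ ∧ ζ < par.ord ∧ x = β ζ} := ⟨ε, le_refl _, hε, rfl⟩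
      refine hcon ε hε (hmono _ _ ?_ ?_ (hsubs hmem))
      · rintro x ⟨ζ, hζ1, hζ2, rfl⟩
        exact ⟨ζ, Order.add_one_le_iff.mp hζ1, hζ2, rfl⟩
      · rintro x ⟨ζ, _, hζ, rfl⟩
        exact hβ ζ hζ
  · intro hβ h
    obtain ⟨U, hU1, hU2, hU3⟩ := h
    have hchoice : ∀ ε, ε < par.ord → ∃ x, x ∈ U ε ∧ x ∉ cl (U (ε + 1)) := by
      intro ε hε
      have := hU3 ε hε
      rw [Set.not_subset] at this
      obtain ⟨x, hx1, hx2⟩ := this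
      exact ⟨x, hx1, hx2⟩
    classical
    set β : Ordinal → Ordinal := fun ε =>
      if h : ε < par.ord then (hchoice ε h).choose else 0 with hβdef
    have hβmem : ∀ ε (h : ε < par.ord), β ε ∈ U ε ∧ β ε ∉ cl (U (ε + 1)) := by
      intro ε h
      simp only [hβdef, dif_pos h]
      exact (hchoice ε h).choose_spec
    obtain ⟨ε, hε, hmem⟩ := hβ β (fun ε h => hU1 ε h (hβmem ε h).1)
    have hsucc : ε + 1 < par.ord := hlim.succ_lt hε
    have hsubs : {x | ∃ ζ, ε < ζ ∧ ζ < par.ord ∧ x = β ζ} ⊆ U (ε + 1) := by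
      rintro x ⟨ζ, hζ1, hζ2, rfl⟩
      exact hU2 (ε + 1) ζ (Order.add_one_le_iff.mpr hζ1) hζ2 (hβmem ζ hζ2).1
    have := hmono _ _ hsubs (hU1 _ hsucc) hmem
    exact (hβmem ε hε).2 this
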